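/- Suppose two continuous functions f, g : ℝ → ℝᵖ satisfy f(t) = C e^{tA} x and g(t) = C e^{tA} z for observable (C, A), i.e. the observability matrix [C; CA; …; CA^{n-1}] has rank n. If f(t) = g(t) for all t in some nonempty open interval, then x = z. -/

import Mathlib

open Matrix

theorem stmt_10 {n p : ℕ} (A : Matrix (Fin n) (Fin n) ℝ) (C : Matrix (Fin p) (Fin n) ℝ)
    (hobs : ∀ v : Fin n → ℝ, (∀ k < n, C.mulVec ((A ^ k).mulVec v) = 0) → v = 0)
    (x z : Fin n → ℝ) (a b : ℝ) (hab : a < b)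
    (heq : ∀ t ∈ Set.Ioo a b,
      C.mulVec ((NormedSpace.exp (t • A)).mulVec x)
        = C.mulVec ((NormedSpace.exp (t • A)).mulVec z)) :
    x = z := by
  letI : SeminormedRing (Matrix (Fin n) (Fin n) ℝ) := Matrix.linftyOpSemiNormedRing
  letI : NormedRing (Matrix (Fin n) (Fin n) ℝ) := Matrix.linftyOpNormedRing
  letI : NormedAlgebra ℝ (Matrix (Fin n) (Fin n) ℝ) := Matrix.linftyOpNormedAlgebra
  set w : Fin n → ℝ := x - z with hw
  -- base: C e^{tA} w = 0 on the interval
  have hbase : ∀ t ∈ Set.Ioo a b, C.mulVec ((NormedSpace.exp (t • A)).mulVec w) = 0 := by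
    intro t ht
    have := heq t ht
    simp only [hw, Matrix.mulVec_sub, this, sub_self]
  -- key induction: for all k, C A^k e^{tA} w = 0 on the interval
  have hkey : ∀ k, ∀ t ∈ Set.Ioo a b,
      C.mulVec ((A ^ k).mulVec ((NormedSpace.exp (t • A)).mulVec w)) = 0 := by
    intro k
    induction k with
    | zero => simpa using hbase
    | succ k ih =>
      intro t ht
      -- the function g u = C A^k e^{uA} w vanishes on Ioo a b
      set L : Matrix (Fin n) (Fin n) ℝ →ₗ[ℝ] (Fin p → ℝ) :=
        { toFun := fun M => C.mulVec ((A ^ k).mulVec (M.mulVec w))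
          map_add' := by intro M N; simp [Matrix.add_mulVec, Matrix.mulVec_add]
          map_smul' := by intro c M; simp [Matrix.smul_mulVec, Matrix.mulVec_smul] } with hL
      have hLc : HasFDerivAt (L.toContinuousLinearMap)
          (L.toContinuousLinearMap) (NormedSpace.exp (t • A)) :=
        (L.toContinuousLinearMap).hasFDerivAt
      have hexp : HasDerivAt (fun u : ℝ => NormedSpace.exp (u • A))
          (NormedSpace.exp (t • A) * A) t := hasDerivAt_exp_smul_const A t
      have hg : HasDerivAt (fun u : ℝ => L (NormedSpace.exp (u • A)))
          (L (NormedSpace.exp (t • A) * A)) t := by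
        have := hLc.comp_hasDerivAt t hexp
        exact this
      -- g is 0 near t
      have hzero : (fun u : ℝ => L (NormedSpace.exp (u • A))) =ᶠ[nhds t] fun _ => 0 := by
        filter_upwards [isOpen_Ioo.mem_nhds ht] with u hu
        exact ih u hu
      have hg0 : HasDerivAt (fun u : ℝ => L (NormedSpace.exp (u • A))) 0 t := by
        have hc : HasDerivAt (fun _ : ℝ => (0 : Fin p → ℝ)) 0 t := hasDerivAt_const t 0
        exact hc.congr_of_eventuallyEq hzero
      have hd : L (NormedSpace.exp (t • A) * A) = 0 := hg.unique hg0
      -- rewrite L (exp * A) as C A^{k+1} e^{tA} w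
      have hcomm : Commute (NormedSpace.exp (t • A)) A :=
        ((Commute.refl A).smul_left t).exp_left
      have : L (NormedSpace.exp (t • A) * A) =
          C.mulVec ((A ^ (k + 1)).mulVec ((NormedSpace.exp (t • A)).mulVec w)) := by
        simp only [hL, LinearMap.coe_mk, AddHom.coe_mk]
        rw [hcomm.eq]
        simp [Matrix.mulVec_mulVec, pow_succ, Matrix.mul_assoc]
      rw [← this]
      exact hd
  -- apply observability at t0 = midpoint
  set t0 : ℝ := (a + b) / 2 with ht0
  have ht0m : t0 ∈ Set.Ioo a b := ⟨by linarith, by linarith⟩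
  have hv : (NormedSpace.exp (t0 • A)).mulVec w = 0 := by
    apply hobs
    intro k _
    exact hkey k t0 ht0m
  have hinv : NormedSpace.exp (-(t0 • A)) * NormedSpace.exp (t0 • A) = 1 := by
    have h := NormedSpace.exp_add_of_commute_of_mem_ball (𝕂 := ℝ) ((Commute.refl (t0 • A)).neg_left)
      ((NormedSpace.expSeries_radius_eq_top ℝ (Matrix (Fin n) (Fin n) ℝ)).symm ▸ edist_lt_top _ _)
      ((NormedSpace.expSeries_radius_eq_top ℝ (Matrix (Fin n) (Fin n) ℝ)).symm ▸ edist_lt_top _ _)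
    rw [neg_add_cancel, NormedSpace.exp_zero] at h
    exact h.symm
  have hw0 : w = 0 := by
    have := congrArg (fun v => (NormedSpace.exp (-(t0 • A))).mulVec v) hv
    simpa [Matrix.mulVec_mulVec, hinv] using this
  have : x - z = 0 := hw0
  exact sub_eq_zero.mp this
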